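/- Every partial order whose Hasse diagram is a rooted tree with the unique minimal element as root (a cs-tree) has order dimension at most 2; i.e., it is the intersection of two linear orders. -/

import Mathlib

/-- Wolk: every finite cs-tree (a partial order with a
minimum element `b` in which every element other than `b` covers exactly one
element, i.e. whose Hasse diagram is a tree rooted at the unique minimal
element) has order dimension at most 2: it is the intersection of two linear
orders. -/
theorem stmt8 {α : Type*} [Fintype α] [PartialOrder α]
    (b : α) (hb : ∀ x, b ≤ x)
    (hcov : ∀ x : α, x ≠ b → ∃! y : α, y ⋖ x) :
    ∃ f g : α → ℕ, Function.Injective f ∧ Function.Injective g ∧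
      ∀ x y : α, x ≤ y ↔ (f x ≤ f y ∧ g x ≤ g y) := by
  classical
  -- down-sets are chains
  have hchain : ∀ t : α, ∀ u w : α, u ≤ t → w ≤ t → u ≤ w ∨ w ≤ u := by
    intro t
    induction t using WellFoundedLT.induction with
    | ind t ih =>
      intro u w hu hw
      rcases eq_or_lt_of_le hu with rfl | hu'
      · exact Or.inr hw
      rcases eq_or_lt_of_le hw with rfl | hw'
      · exact Or.inl hu
      have hxb : t ≠ b := by
        rintro rfl
        exact absurd (le_antisymm hu (hb u)) (ne_of_lt hu')
      obtain ⟨p, hp, hpuniq⟩ := hcov t hxb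
      obtain ⟨z, hz1, hz2⟩ := hu'.exists_le_covby
      obtain ⟨z', hz1', hz2'⟩ := hw'.exists_le_covby
      exact ih p hp.lt u w ((hpuniq z hz2) ▸ hz1) ((hpuniq z' hz2') ▸ hz1')
  -- meet function
  have hmeet : ∀ x y : α, ∃ w : α, w ≤ x ∧ w ≤ y ∧ ∀ z, z ≤ x → z ≤ y → z ≤ w := by
    intro x y
    obtain ⟨w, hwS, hwmax⟩ := Finset.exists_maximal
      (s := Finset.univ.filter fun z => z ≤ x ∧ z ≤ y)
      ⟨b, by simp [hb x, hb y]⟩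
    simp only [Finset.mem_filter, Finset.mem_univ, true_and] at hwS
    refine ⟨w, hwS.1, hwS.2, fun z hzx hzy => ?_⟩
    rcases hchain x z w hzx hwS.1 with h | h
    · exact h
    · rcases eq_or_lt_of_le h with rfl | h'
      · exact le_rfl
      · exact absurd h' (not_lt_of_ge (hwmax (by simp [hzx, hzy]) h'.le))
  choose m hm1 hm2 hm3 using hmeet
  have hmcomm : ∀ x y, m x y = m y x := fun x y =>
    le_antisymm (hm3 y x _ (hm2 x y) (hm1 x y)) (hm3 x y _ (hm2 y x) (hm1 y x))
  -- successor toward x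
  have hsucc : ∀ x w : α, ∃ z, w < x → w ⋖ z ∧ z ≤ x := by
    intro x w
    by_cases h : w < x
    · obtain ⟨z, hz⟩ := h.exists_covby_le
      exact ⟨z, fun _ => hz⟩
    · exact ⟨x, fun h' => absurd h' h⟩
  choose s hs using hsucc
  have hs_le : ∀ x w t : α, w < x → w < t → t ≤ x → s x w ≤ t := by
    intro x w t hwx hwt htx
    rcases hchain x (s x w) t (hs x w hwx).2 htx with h | h
    · exact h
    · rcases eq_or_lt_of_le h with rfl | hlt
      · exact le_rfl
      · exact absurd hlt ((hs x w hwx).1.2 hwt)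
  have hs_eq : ∀ x y w : α, w < x → w < y → s x w ≤ y → s x w = s y w := by
    intro x y w hwx hwy hxy
    have h1 := hs_le y w (s x w) hwy (hs x w hwx).1.1 hxy
    rcases eq_or_lt_of_le h1 with h | h
    · exact h.symm
    · exact absurd h ((hs x w hwx).1.2 (hs y w hwy).1.1)
  have hmlt : ∀ x y : α, ¬ x ≤ y → m x y < x :=
    fun x y hxy => lt_of_le_of_ne (hm1 x y) (fun h => hxy (h ▸ hm2 x y))
  -- the relation
  set R : (α → ℕ) → α → α → Prop :=
    fun v x y => x ≤ y ∨ (¬ x ≤ y ∧ ¬ y ≤ x ∧ v (s x (m x y)) < v (s y (m x y))) with hR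
  -- s-values differ for incomparable pair
  have hsne : ∀ x y : α, ¬ x ≤ y → ¬ y ≤ x → s x (m x y) ≠ s y (m x y) := by
    intro x y hxy hyx h
    have hxlt : m x y < x := hmlt x y hxy
    have hylt : m x y < y := by rw [hmcomm]; exact hmlt y x hyx
    have h1 := (hs x (m x y) hxlt).2
    have h2 : s x (m x y) ≤ y := h ▸ (hs y (m x y) hylt).2
    exact absurd (hm3 x y _ h1 h2) (not_le_of_gt (hs x (m x y) hxlt).1.1)
  -- transitivity
  have hRtrans : ∀ v x y z, R v x y → R v y z → R v x z := by
    intro v x y z hxy hyz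
    by_cases hxz : x ≤ z
    · exact Or.inl hxz
    rcases hxy with hxy | ⟨hxy, hyx, hv1⟩
    · rcases hyz with hyz | ⟨hyz, hzy, hv2⟩
      · exact absurd (hxy.trans hyz) hxz
      · -- x ≤ y, y ‖ z
        have hzx : ¬ z ≤ x := fun h => hzy (h.trans hxy)
        have hw : m x z = m y z := by
          refine le_antisymm (hm3 y z _ ((hm1 x z).trans hxy) (hm2 x z)) ?_
          refine hm3 x z _ ?_ (hm2 y z)
          rcases hchain y (m y z) x (hm1 y z) hxy with h | h
          · exact h
          · exact absurd (h.trans (hm2 y z)) hxz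
        have hwx : m y z < x := hw ▸ hmlt x z hxz
        have hwy : m y z < y := hmlt y z hyz
        have hse : s x (m y z) = s y (m y z) :=
          hs_eq x y (m y z) hwx hwy ((hs x (m y z) hwx).2.trans hxy)
        exact Or.inr ⟨hxz, hzx, by rw [hw, hse]; exact hv2⟩
    · rcases hyz with hyz | ⟨hyz, hzy, hv2⟩
      · -- x ‖ y, y ≤ z
        have hzx : ¬ z ≤ x := fun h => hyx (hyz.trans h)
        have hw : m x z = m x y := by
          refine le_antisymm ?_ (hm3 x z _ (hm1 x y) ((hm2 x y).trans hyz))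
          refine hm3 x y _ (hm1 x z) ?_
          rcases hchain z (m x z) y (hm2 x z) hyz with h | h
          · exact h
          · exact absurd (h.trans (hm1 x z)) hyx
        have hwy : m x y < y := by rw [hmcomm]; exact hmlt y x hyx
        have hwz : m x y < z := lt_of_lt_of_le hwy hyz
        have hse : s z (m x y) = s y (m x y) :=
          (hs_eq y z (m x y) hwy hwz ((hs y (m x y) hwy).2.trans hyz)).symm
        exact Or.inr ⟨hxz, hzx, by rw [hw, hse]; exact hv1⟩
      · -- x ‖ y, y ‖ z
        have hw1x : m x y < x := hmlt x y hxy
        have hw1y : m x y < y := by rw [hmcomm]; exact hmlt y x hyx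
        have hw2y : m y z < y := hmlt y z hyz
        have hw2z : m y z < z := by rw [hmcomm]; exact hmlt z y hzy
        have hzx : ¬ z ≤ x := by
          intro hzx
          have e1 : m y z ≤ m x y := hm3 x y _ ((hm2 y z).trans hzx) (hm1 y z)
          have e2 : m x y ≤ m y z := by
            refine hm3 y z _ hw1y.le ?_
            rcases hchain x (m x y) z (hm1 x y) hzx with h | h
            · exact h
            · exact absurd (h.trans (hm2 x y)) hzy
          have hweq : m x y = m y z := le_antisymm e2 e1
          rw [← hweq] at hv2 hw2z
          have hse : s z (m x y) = s x (m x y) :=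
            hs_eq z x (m x y) hw2z hw1x ((hs z (m x y) hw2z).2.trans hzx)
          rw [hse] at hv2
          exact lt_asymm hv1 hv2
        refine Or.inr ⟨hxz, hzx, ?_⟩
        have htri : m x y = m y z ∨ m x y < m y z ∨ m y z < m x y := by
          rcases hchain y (m x y) (m y z) hw1y.le hw2y.le with h | h
          · rcases eq_or_lt_of_le h with h' | h'
            · exact Or.inl h'
            · exact Or.inr (Or.inl h')
          · rcases eq_or_lt_of_le h with h' | h'
            · exact Or.inl h'.symm
            · exact Or.inr (Or.inr h')
        rcases htri with heq | hlt | hlt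
        · -- equal meets
          rw [← heq] at hv2 hw2z
          have hw : m x z = m x y := by
            refine le_antisymm ?_ (hm3 x z _ hw1x.le hw2z.le)
            by_contra hc
            have hlt' : m x y < m x z :=
              lt_of_le_of_ne (hm3 x z _ hw1x.le hw2z.le) (fun h => hc h.ge)
            have h1 : s x (m x y) ≤ m x z := hs_le x (m x y) (m x z) hw1x hlt' (hm1 x z)
            have hse : s x (m x y) = s z (m x y) :=
              hs_eq x z (m x y) hw1x hw2z (h1.trans (hm2 x z))
            rw [hse] at hv1
            exact lt_asymm hv1 hv2
          rw [hw]
          exact hv1.trans hv2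
        · -- m x y < m y z
          have hsyz : s y (m x y) ≤ m y z := hs_le y (m x y) (m y z) hw1y hlt (hm1 y z)
          have hw1z : m x y < z := lt_of_lt_of_le hlt (hm2 y z)
          have e2 : s y (m x y) = s z (m x y) :=
            hs_eq y z (m x y) hw1y hw1z (hsyz.trans (hm2 y z))
          have hw : m x z = m x y := by
            refine le_antisymm ?_ (hm3 x z _ hw1x.le hw1z.le)
            by_contra hc
            have hlt' : m x y < m x z :=
              lt_of_le_of_ne (hm3 x z _ hw1x.le hw1z.le) (fun h => hc h.ge)
            have h1 : s x (m x y) ≤ z :=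
              (hs_le x (m x y) (m x z) hw1x hlt' (hm1 x z)).trans (hm2 x z)
            have e1 : s x (m x y) = s z (m x y) := hs_eq x z (m x y) hw1x hw1z h1
            rw [e1, ← e2] at hv1
            exact lt_irrefl _ hv1
          rw [hw, ← e2]
          exact hv1
        · -- m y z < m x y
          have hsyx : s y (m y z) ≤ m x y := hs_le y (m y z) (m x y) hw2y hlt hw1y.le
          have hw2x : m y z < x := lt_of_lt_of_le hlt (hm1 x y)
          have e2 : s y (m y z) = s x (m y z) :=
            hs_eq y x (m y z) hw2y hw2x (hsyx.trans (hm1 x y))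
          have hw : m x z = m y z := by
            refine le_antisymm ?_ (hm3 x z _ hw2x.le hw2z.le)
            by_contra hc
            have hlt' : m y z < m x z :=
              lt_of_le_of_ne (hm3 x z _ hw2x.le hw2z.le) (fun h => hc h.ge)
            have h1 : s z (m y z) ≤ x :=
              (hs_le z (m y z) (m x z) hw2z hlt' (hm2 x z)).trans (hm1 x z)
            have e1 : s z (m y z) = s x (m y z) := hs_eq z x (m y z) hw2z hw2x h1
            rw [e1, ← e2] at hv2
            exact lt_irrefl _ hv2
          rw [hw, ← e2]
          exact hv2
  -- totality
  have hRtotal : ∀ (v : α → ℕ), Function.Injective v → ∀ x y, R v x y ∨ R v y x := by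
    intro v hv x y
    by_cases hxy : x ≤ y
    · exact Or.inl (Or.inl hxy)
    by_cases hyx : y ≤ x
    · exact Or.inr (Or.inl hyx)
    have hne : v (s x (m x y)) ≠ v (s y (m x y)) := fun h => hsne x y hxy hyx (hv h)
    rcases lt_or_gt_of_ne hne with h | h
    · exact Or.inl (Or.inr ⟨hxy, hyx, h⟩)
    · refine Or.inr (Or.inr ⟨hyx, hxy, ?_⟩)
      rw [hmcomm y x]
      exact h
  -- antisymmetry
  have hRanti : ∀ (v : α → ℕ), ∀ x y, R v x y → R v y x → x = y := by
    intro v x y hxy hyx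
    rcases hxy with hxy | ⟨hxy, hyx', hv1⟩
    · rcases hyx with hyx | ⟨hyx, hxy', _⟩
      · exact le_antisymm hxy hyx
      · exact absurd hxy hxy'
    · rcases hyx with hyx | ⟨hyx, hxy', hv2⟩
      · exact absurd hyx hyx'
      · rw [hmcomm y x] at hv2
        exact absurd hv2 (lt_asymm hv1)
  -- rank function for a total preorder-like relation
  have hrank : ∀ (Rr : α → α → Prop), (∀ x y z, Rr x y → Rr y z → Rr x z) →
      (∀ x y, Rr x y ∨ Rr y x) → (∀ x y, Rr x y → Rr y x → x = y) →
      ∃ F : α → ℕ, ∀ x y, Rr x y ↔ F x ≤ F y := by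
    intro Rr htrans htotal hanti
    refine ⟨fun x => (Finset.univ.filter fun z => Rr z x).card, fun x y => ⟨?_, ?_⟩⟩
    · intro h
      apply Finset.card_le_card
      intro z hz
      simp only [Finset.mem_filter, Finset.mem_univ, true_and] at hz ⊢
      exact htrans z x y hz h
    · intro h
      by_contra hxy
      rcases htotal x y with h' | h'
      · exact hxy h'
      have hsub : (Finset.univ.filter fun z => Rr z y) ⊆ Finset.univ.filter fun z => Rr z x := by
        intro z hz
        simp only [Finset.mem_filter, Finset.mem_univ, true_and] at hz ⊢
        exact htrans z y x hz h'
      have hxmem : x ∈ Finset.univ.filter fun z => Rr z x := by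
        simp only [Finset.mem_filter, Finset.mem_univ, true_and]
        rcases htotal x x with h'' | h'' <;> exact h''
      have hxnot : x ∉ Finset.univ.filter fun z => Rr z y := by
        simp only [Finset.mem_filter, Finset.mem_univ, true_and]
        exact hxy
      exact absurd h (not_le_of_gt (Finset.card_lt_card ((Finset.ssubset_iff_of_subset hsub).mpr ⟨x, hxmem, hxnot⟩)))
  -- the two labelings
  set n := Fintype.card α with hn
  set e : α → ℕ := fun a => ((Fintype.equivFin α) a : ℕ) with he
  have heinj : Function.Injective e := fun a c h =>
    (Fintype.equivFin α).injective (Fin.ext h)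
  have helt : ∀ a, e a < n := fun a => ((Fintype.equivFin α) a).isLt
  set e' : α → ℕ := fun a => n - e a with he'
  have he'inj : Function.Injective e' := by
    intro a c h
    apply heinj
    have := helt a; have := helt c
    simp only [he'] at h
    omega
  have he'rev : ∀ a c : α, e' a < e' c ↔ e c < e a := by
    intro a c
    have := helt a; have := helt c
    simp only [he']
    omega
  obtain ⟨f, hf⟩ := hrank (R e) (hRtrans e) (hRtotal e heinj) (hRanti e)
  obtain ⟨g, hg⟩ := hrank (R e') (hRtrans e') (hRtotal e' he'inj) (hRanti e')
  refine ⟨f, g, ?_, ?_, ?_⟩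
  · intro a c h
    exact hRanti e a c ((hf a c).2 h.le) ((hf c a).2 h.ge)
  · intro a c h
    exact hRanti e' a c ((hg a c).2 h.le) ((hg c a).2 h.ge)
  · intro x y
    constructor
    · intro h
      exact ⟨(hf x y).1 (Or.inl h), (hg x y).1 (Or.inl h)⟩
    · rintro ⟨h1, h2⟩
      rcases (hf x y).2 h1 with h | ⟨hxy, hyx, hv1⟩
      · exact h
      rcases (hg x y).2 h2 with h | ⟨_, _, hv2⟩
      · exact h
      rw [he'rev] at hv2
      exact absurd hv1 (lt_asymm hv2)
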